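/- If r₀ = r_e, then for every θ the radial derivative satisfies ∂_r Q(r,θ)|_{r=r_e} = −μ'(r_e)·ρ²(r_e,θ)/(b²(r_e²+a²)²) < 0, and consequently there exists γ > 0 such that Q(r,θ) < 0 for all r ∈ (r_e, r_e+γ) and all θ. Analogously, if r₀ = r_c, then ∂_r Q(r,θ)|_{r=r_c} = −μ'(r_c)·ρ²(r_c,θ)/(b²(r_c²+a²)²) > 0 for every θ, and there exists γ > 0 such that Q(r,θ) < 0 for all r ∈ (r_c−γ, r_c) and all θ. -/

import Mathlib

open Real

private lemma Qcore_neg (b a R : ℝ) (hb : 0 < b) (hR : R ≠ 0)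
    (c : ℝ → ℝ) (hc0 : ∀ θ, 0 ≤ c θ) (hcb : ∀ θ, c θ ≤ b)
    (μ : ℝ → ℝ) (Q : ℝ → ℝ → ℝ)
    (hQ : ∀ r θ, Q r θ = (1/(b^2*(r^2 + a^2*(cos θ)^2)))*
      (c θ*(sin θ)^2*(a - (r^2 + a^2)*a/(R^2 + a^2))^2
        - μ r*(1 - a^2*(sin θ)^2/(R^2 + a^2))^2))
    (r : ℝ) (hr : r ≠ 0) (P : ℝ) (hP : 0 < P) (hμP : P ≤ μ r)
    (hsm : b*a^2*(R^2 - r^2)^2 < P*R^4) (θ : ℝ) : Q r θ < 0 := by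
  have hA : (0:ℝ) < R^2 + a^2 := by positivity
  have hrr : (0:ℝ) < r^2 + a^2*(cos θ)^2 := by positivity
  have hμr : 0 < μ r := lt_of_lt_of_le hP hμP
  have hv : (a - (r^2+a^2)*a/(R^2+a^2))^2 = a^2*(R^2-r^2)^2/(R^2+a^2)^2 := by
    field_simp; ring
  have hK : R^2/(R^2+a^2) ≤ 1 - a^2*(sin θ)^2/(R^2+a^2) := by
    rw [le_sub_iff_add_le, ← add_div, div_le_one hA]
    nlinarith [sin_sq_le_one θ, sq_nonneg a, sq_nonneg (a*sin θ)]
  have hKpos : (0:ℝ) < R^2/(R^2+a^2) := by positivity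
  have hcs : c θ * (sin θ)^2 ≤ b := by
    nlinarith [sin_sq_le_one θ, hc0 θ, hcb θ, sq_nonneg (sin θ)]
  have e1 : c θ*(sin θ)^2*(a - (r^2+a^2)*a/(R^2+a^2))^2
      ≤ b * (a^2*(R^2-r^2)^2/(R^2+a^2)^2) := by
    rw [hv]
    apply mul_le_mul hcs le_rfl (by positivity) hb.le
  have e2 : P*(R^2/(R^2+a^2))^2 ≤ μ r * (1 - a^2*(sin θ)^2/(R^2+a^2))^2 := by
    apply mul_le_mul hμP (pow_le_pow_left₀ hKpos.le hK 2) (by positivity) hμr.le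
  have e5 : b * (a^2*(R^2-r^2)^2/(R^2+a^2)^2) < P*(R^2/(R^2+a^2))^2 := by
    rw [div_pow, ← mul_div_assoc, ← mul_div_assoc]
    rw [div_lt_div_iff₀ (by positivity) (by positivity)]
    nlinarith [mul_lt_mul_of_pos_right hsm (show (0:ℝ) < (R^2+a^2)^2 by positivity)]
  rw [hQ]
  apply mul_neg_of_pos_of_neg (by positivity)
  linarith

private lemma Qcore_deriv (b a R : ℝ) (hb : 0 < b) (hR : R ≠ 0)
    (c : ℝ → ℝ) (μ : ℝ → ℝ) (D : ℝ) (hμR : μ R = 0) (hD : HasDerivAt μ D R)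
    (Q : ℝ → ℝ → ℝ)
    (hQ : ∀ r θ, Q r θ = (1/(b^2*(r^2 + a^2*(cos θ)^2)))*
      (c θ*(sin θ)^2*(a - (r^2 + a^2)*a/(R^2 + a^2))^2
        - μ r*(1 - a^2*(sin θ)^2/(R^2 + a^2))^2)) (θ : ℝ) :
    deriv (fun r => Q r θ) R = -(D*(R^2 + a^2*(cos θ)^2))/(b^2*(R^2 + a^2)^2) := by
  have hA : (0:ℝ) < R^2 + a^2 := by positivity
  have hρ : (0:ℝ) < R^2 + a^2*(cos θ)^2 := by positivity
  have hb' : b ≠ 0 := ne_of_gt hb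
  have hfun : (fun r => Q r θ) = fun r =>
      (b^2*(r^2 + a^2*(cos θ)^2))⁻¹ *
      (c θ*(sin θ)^2*(a - (r^2 + a^2)*a/(R^2 + a^2))^2
        - μ r*(1 - a^2*(sin θ)^2/(R^2 + a^2))^2) := by
    funext r; rw [hQ r θ, one_div]
  have hgR : b^2*(R^2 + a^2*(cos θ)^2) ≠ 0 := by positivity
  have hg : HasDerivAt (fun r : ℝ => b^2*(r^2 + a^2*(cos θ)^2)) (b^2*(2*R)) R := by
    have h := ((hasDerivAt_pow 2 R).add_const (a^2*(cos θ)^2)).const_mul (b^2)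
    refine h.congr_deriv ?_
    push_cast; ring
  have hinv : HasDerivAt (fun r : ℝ => (b^2*(r^2 + a^2*(cos θ)^2))⁻¹)
      (-(b^2*(2*R)) / (b^2*(R^2 + a^2*(cos θ)^2))^2) R := hg.inv hgR
  have hv : HasDerivAt (fun r : ℝ => a - (r^2 + a^2)*a/(R^2 + a^2))
      (-((2*R)*a/(R^2 + a^2))) R := by
    have h := HasDerivAt.const_sub a
      ((((hasDerivAt_pow 2 R).add_const (a^2)).mul_const a).div_const (R^2 + a^2))
    refine h.congr_deriv ?_
    push_cast; ring
  have hv2 := hv.pow 2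
  have hterm1 := hv2.const_mul (c θ*(sin θ)^2)
  have hterm2 := hD.mul_const ((1 - a^2*(sin θ)^2/(R^2 + a^2))^2)
  have hN := hterm1.sub hterm2
  have htot := hinv.mul hN
  rw [hfun]; erw [htot.deriv]; simp only [Pi.sub_apply, Pi.pow_apply]
  have hvR : a - (R^2 + a^2)*a/(R^2 + a^2) = 0 := by field_simp; ring
  rw [hμR, hvR]
  rw [Real.sin_sq θ]
  field_simp
  ring

set_option maxHeartbeats 2000000 in
/-- For the horizon Killing fields: if `r₀ = r_e`, then for every `θ`
`∂_r Q(r,θ)|_{r=r_e} = −μ'(r_e)·ρ²(r_e,θ)/(b²(r_e²+a²)²) < 0`, and consequently `Q < 0`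
on a region `(r_e, r_e+γ)` for some `γ > 0`; analogously, if `r₀ = r_c`, then
`∂_r Q(r,θ)|_{r=r_c} = −μ'(r_c)·ρ²(r_c,θ)/(b²(r_c²+a²)²) > 0` and `Q < 0` on
`(r_c−γ, r_c)` for some `γ > 0`. -/
theorem killing_timelike_near_horizon
    (Λ m a rm rC re rc : ℝ) (hΛ : 0 < Λ) (hm : 0 < m)
    (μ : ℝ → ℝ)
    (hμ : ∀ r, μ r = -(Λ/3)*r^4 + (1 - Λ*a^2/3)*r^2 - 2*m*r + a^2)
    (hord : rm < rC ∧ rC < re ∧ re < rc)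
    (hroots : ∀ r, μ r = -(Λ/3)*(r - rm)*(r - rC)*(r - re)*(r - rc))
    (b : ℝ) (hb : b = 1 + Λ*a^2/3)
    (c : ℝ → ℝ) (hc : ∀ θ, c θ = 1 + Λ*a^2/3*(cos θ)^2)
    (r₀ : ℝ) (hr₀ : re ≤ r₀ ∧ r₀ ≤ rc)
    (Q : ℝ → ℝ → ℝ)
    (hQ : ∀ r θ, Q r θ = (1/(b^2*(r^2 + a^2*(cos θ)^2)))*
      (c θ*(sin θ)^2*(a - (r^2 + a^2)*a/(r₀^2 + a^2))^2
        - μ r*(1 - a^2*(sin θ)^2/(r₀^2 + a^2))^2)) :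
    (r₀ = re →
      (∀ θ, deriv (fun r => Q r θ) re
          = -(deriv μ re*(re^2 + a^2*(cos θ)^2))/(b^2*(re^2 + a^2)^2) ∧
        deriv (fun r => Q r θ) re < 0) ∧
      ∃ γ > (0:ℝ), ∀ r θ : ℝ, re < r → r < re + γ → Q r θ < 0) ∧
    (r₀ = rc →
      (∀ θ, deriv (fun r => Q r θ) rc
          = -(deriv μ rc*(rc^2 + a^2*(cos θ)^2))/(b^2*(rc^2 + a^2)^2) ∧
        0 < deriv (fun r => Q r θ) rc) ∧
      ∃ γ > (0:ℝ), ∀ r θ : ℝ, rc - γ < r → r < rc → Q r θ < 0) := by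
  obtain ⟨h1, h2, h3⟩ := hord
  have hΛ3 : (0:ℝ) < Λ/3 := by linarith
  have hb0 : 0 < b := by rw [hb]; nlinarith [sq_nonneg a]
  have hc0 : ∀ θ, 0 ≤ c θ := fun θ => by
    rw [hc]; nlinarith [sq_nonneg (a*cos θ)]
  have hcb : ∀ θ, c θ ≤ b := fun θ => by
    rw [hc, hb]
    nlinarith [mul_nonneg (mul_nonneg hΛ.le (sq_nonneg a)) (sub_nonneg.mpr (cos_sq_le_one θ))]
  have hE : ∀ r:ℝ, -(Λ/3)*r^4 + (1 - Λ*a^2/3)*r^2 - 2*m*r + a^2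
      = -(Λ/3)*(r - rm)*(r - rC)*(r - re)*(r - rc) :=
    fun r => (hμ r).symm.trans (hroots r)
  have hsum : rm + rC + re + rc = 0 := by
    have h : Λ * (rm + rC + re + rc) = 0 := by
      linear_combination (1/2)*(hE 1) - (1/2)*(hE (-1)) - (1/4)*(hE 2) + (1/4)*(hE (-2))
    rcases mul_eq_zero.mp h with h|h
    · exact absurd h hΛ.ne'
    · exact h
  have hs3 : Λ*(rm*rC*re + rm*rC*rc + rm*re*rc + rC*re*rc) = -6*m := by
    linear_combination (-2)*(hE 1) + 2*(hE (-1)) + (1/4)*(hE 2) - (1/4)*(hE (-2))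
  have hμe : μ re = 0 := by rw [hroots re]; ring
  have hμc : μ rc = 0 := by rw [hroots rc]; ring
  have hre0 : re ≠ 0 := by
    intro h
    have ha : a^2 = 0 := by
      have h0 : μ 0 = a^2 := by rw [hμ 0]; ring
      rw [← h, hμe] at h0; exact h0.symm
    have ha' : a = 0 := by nlinarith [sq_nonneg a]
    rw [h] at hs3
    have hp : 0 < rm*rC*rc := by
      have : 0 < rm*rC := mul_pos_of_neg_of_neg (by linarith) (by linarith)
      exact mul_pos this (by linarith)
    nlinarith [mul_pos hΛ hp]
  have hrc0 : rc ≠ 0 := by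
    intro h
    rw [h] at hsum
    linarith
  -- derivative of μ at re and rc via the factored form
  have hμfun2 : μ = fun r => -(Λ/3)*(r - rm)*(r - rC)*(r - re)*(r - rc) := funext hroots
  have hfre : HasDerivAt μ (-(Λ/3)*((re-rm)*(re-rC)*(re-rc))) re := by
    rw [hμfun2]
    have h := ((((hasDerivAt_id' (x := re)).sub_const rm).const_mul (-(Λ/3))).mul
        ((hasDerivAt_id' (x := re)).sub_const rC)).mul
        ((hasDerivAt_id' (x := re)).sub_const re) |>.mul
        ((hasDerivAt_id' (x := re)).sub_const rc)
    refine h.congr_deriv ?_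
    simp only [Pi.mul_apply]; ring
  have hfrc : HasDerivAt μ (-(Λ/3)*((rc-rm)*(rc-rC)*(rc-re))) rc := by
    rw [hμfun2]
    have h := ((((hasDerivAt_id' (x := rc)).sub_const rm).const_mul (-(Λ/3))).mul
        ((hasDerivAt_id' (x := rc)).sub_const rC)).mul
        ((hasDerivAt_id' (x := rc)).sub_const re) |>.mul
        ((hasDerivAt_id' (x := rc)).sub_const rc)
    refine h.congr_deriv ?_
    simp only [Pi.mul_apply]; ring
  have hDe : 0 < deriv μ re := by
    rw [hfre.deriv]
    nlinarith [mul_pos (mul_pos (show (0:ℝ) < re-rm by linarith)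
      (show (0:ℝ) < re-rC by linarith)) (show (0:ℝ) < rc-re by linarith), hΛ3]
  have hDc : deriv μ rc < 0 := by
    rw [hfrc.deriv]
    nlinarith [mul_pos (mul_pos (show (0:ℝ) < rc-rm by linarith)
      (show (0:ℝ) < rc-rC by linarith)) (show (0:ℝ) < rc-re by linarith), hΛ3]
  constructor
  · -- r₀ = re
    intro h0; rw [h0] at hQ
    constructor
    · intro θ
      have hd := Qcore_deriv b a re hb0 hre0 c μ (deriv μ re) hμe
        hfre.differentiableAt.hasDerivAt Q hQ θ
      refine ⟨hd, ?_⟩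
      rw [hd]
      apply div_neg_of_neg_of_pos
      · nlinarith [mul_pos hDe (show (0:ℝ) < re^2 + a^2*(cos θ)^2 by positivity)]
      · positivity
    · -- negativity on (re, re+γ)
      obtain ⟨C, hCdef⟩ : ∃ C:ℝ, C = Λ/3*((re-rm)*((re-rC)*((rc-re)/2))) := ⟨_, rfl⟩
      have hC : 0 < C := by
        rw [hCdef]
        exact mul_pos hΛ3 (mul_pos (by linarith) (mul_pos (by linarith) (by linarith)))
      obtain ⟨M, hMdef⟩ : ∃ M:ℝ, M = b*a^2*(2*|re|+1)^2 := ⟨_, rfl⟩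
      have hM0 : 0 ≤ M := by rw [hMdef]; positivity
      have hre4 : 0 < re^4 := by nlinarith [mul_pos (pow_two_pos_of_ne_zero hre0) (pow_two_pos_of_ne_zero hre0)]
      obtain ⟨γ, hγpos, hγ1, hγ2, hγ3, hγ4⟩ : ∃ γ:ℝ, 0 < γ ∧ γ ≤ 1 ∧ γ ≤ (rc-re)/2 ∧
          γ ≤ |re| ∧ γ ≤ C*re^4/(M+1) := by
        refine ⟨min (min 1 ((rc-re)/2)) (min |re| (C*re^4/(M+1))), ?_, ?_, ?_, ?_, ?_⟩
        · apply lt_min (lt_min one_pos (by linarith)) (lt_min (abs_pos.mpr hre0)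
            (div_pos (mul_pos hC hre4) (by linarith)))
        · exact le_trans (min_le_left _ _) (min_le_left _ _)
        · exact le_trans (min_le_left _ _) (min_le_right _ _)
        · exact le_trans (min_le_right _ _) (min_le_left _ _)
        · exact le_trans (min_le_right _ _) (min_le_right _ _)
      refine ⟨γ, hγpos, ?_⟩
      intro r θ hr1 hr2
      have hrne : r ≠ 0 := by
        rcases hre0.lt_or_gt with h|h
        · have hre : |re| = -re := abs_of_neg h
          have : r < 0 := by linarith [hγ3]
          exact this.ne
        · exact (lt_trans h hr1).ne'
      have hP : 0 < C*(r-re) := mul_pos hC (by linarith)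
      have hμP : C*(r-re) ≤ μ r := by
        calc C*(r-re) = Λ/3*((re-rm)*((re-rC)*((r-re)*((rc-re)/2)))) := by
              rw [hCdef]; ring
          _ ≤ Λ/3*((r-rm)*((r-rC)*((r-re)*(rc-r)))) := by
              apply mul_le_mul_of_nonneg_left ?_ hΛ3.le
              have t1 : (r-re)*((rc-re)/2) ≤ (r-re)*(rc-r) :=
                mul_le_mul_of_nonneg_left (by linarith) (by linarith)
              have t2 : (re-rC)*((r-re)*((rc-re)/2)) ≤ (r-rC)*((r-re)*(rc-r)) :=
                mul_le_mul (by linarith) t1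
                  (mul_nonneg (by linarith) (by linarith)) (by linarith)
              exact mul_le_mul (by linarith) t2
                (mul_nonneg (by linarith) (mul_nonneg (by linarith) (by linarith)))
                (by linarith)
          _ = μ r := by rw [hroots r]; ring
      have hsm : b*a^2*(re^2-r^2)^2 < C*(r-re)*re^4 := by
        have habs : (r+re)^2 ≤ (2*|re|+1)^2 := by
          have hrabs : |r| ≤ |re| + 1 := by
            calc |r| = |re + (r-re)| := by ring_nf
              _ ≤ |re| + |r-re| := abs_add_le _ _
              _ ≤ |re| + 1 := by rw [abs_of_pos (show (0:ℝ) < r - re by linarith)]; linarith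
          have h1 : |r + re| ≤ 2*|re| + 1 := by
            calc |r+re| ≤ |r| + |re| := abs_add_le _ _
              _ ≤ 2*|re| + 1 := by linarith
          nlinarith [abs_nonneg (r+re), sq_abs (r+re), abs_nonneg re]
        have hγM : γ*(M+1) ≤ C*re^4 := by
          rw [← le_div_iff₀ (by linarith)]
          exact hγ4
        have hgm : γ*M < C*re^4 := by nlinarith
        calc b*a^2*(re^2-r^2)^2 = (r-re)^2*(b*a^2*(r+re)^2) := by ring
          _ ≤ (r-re)^2*(b*a^2*(2*|re|+1)^2) := by gcongr
          _ = (r-re)*((r-re)*M) := by rw [hMdef]; ring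
          _ ≤ (r-re)*(γ*M) := by
              apply mul_le_mul_of_nonneg_left ?_ (by linarith)
              exact mul_le_mul_of_nonneg_right (by linarith) hM0
          _ < (r-re)*(C*re^4) := mul_lt_mul_of_pos_left hgm (by linarith)
          _ = C*(r-re)*re^4 := by ring
      exact Qcore_neg b a re hb0 hre0 c hc0 hcb μ Q hQ r hrne (C*(r-re)) hP hμP hsm θ
  · -- r₀ = rc
    intro h0; rw [h0] at hQ
    constructor
    · intro θ
      have hd := Qcore_deriv b a rc hb0 hrc0 c μ (deriv μ rc) hμc
        hfrc.differentiableAt.hasDerivAt Q hQ θ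
      refine ⟨hd, ?_⟩
      rw [hd]
      apply div_pos
      · nlinarith [mul_neg_of_neg_of_pos hDc (show (0:ℝ) < rc^2 + a^2*(cos θ)^2 by positivity)]
      · positivity
    · obtain ⟨C, hCdef⟩ : ∃ C:ℝ, C = Λ/3*((re-rm)*((re-rC)*((rc-re)/2))) := ⟨_, rfl⟩
      have hC : 0 < C := by
        rw [hCdef]
        exact mul_pos hΛ3 (mul_pos (by linarith) (mul_pos (by linarith) (by linarith)))
      obtain ⟨M, hMdef⟩ : ∃ M:ℝ, M = b*a^2*(2*|rc|+1)^2 := ⟨_, rfl⟩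
      have hM0 : 0 ≤ M := by rw [hMdef]; positivity
      have hrc4 : 0 < rc^4 := by nlinarith [mul_pos (pow_two_pos_of_ne_zero hrc0) (pow_two_pos_of_ne_zero hrc0)]
      obtain ⟨γ, hγpos, hγ1, hγ2, hγ3, hγ4⟩ : ∃ γ:ℝ, 0 < γ ∧ γ ≤ 1 ∧ γ ≤ (rc-re)/2 ∧
          γ ≤ |rc| ∧ γ ≤ C*rc^4/(M+1) := by
        refine ⟨min (min 1 ((rc-re)/2)) (min |rc| (C*rc^4/(M+1))), ?_, ?_, ?_, ?_, ?_⟩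
        · apply lt_min (lt_min one_pos (by linarith)) (lt_min (abs_pos.mpr hrc0)
            (div_pos (mul_pos hC hrc4) (by linarith)))
        · exact le_trans (min_le_left _ _) (min_le_left _ _)
        · exact le_trans (min_le_left _ _) (min_le_right _ _)
        · exact le_trans (min_le_right _ _) (min_le_left _ _)
        · exact le_trans (min_le_right _ _) (min_le_right _ _)
      refine ⟨γ, hγpos, ?_⟩
      intro r θ hr1 hr2
      have hrne : r ≠ 0 := by
        rcases hrc0.lt_or_gt with h|h
        · exact (lt_trans hr2 h).ne
        · have hrc : |rc| = rc := abs_of_pos h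
          have : 0 < r := by linarith [hγ3]
          exact this.ne'
      have hP : 0 < C*(rc-r) := mul_pos hC (by linarith)
      have hμP : C*(rc-r) ≤ μ r := by
        calc C*(rc-r) = Λ/3*((re-rm)*((re-rC)*(((rc-re)/2)*(rc-r)))) := by
              rw [hCdef]; ring
          _ ≤ Λ/3*((r-rm)*((r-rC)*((r-re)*(rc-r)))) := by
              apply mul_le_mul_of_nonneg_left ?_ hΛ3.le
              have hmid : (re+rc)/2 < r := by linarith
              have t1 : ((rc-re)/2)*(rc-r) ≤ (r-re)*(rc-r) :=
                mul_le_mul_of_nonneg_right (by linarith) (by linarith)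
              have t2 : (re-rC)*(((rc-re)/2)*(rc-r)) ≤ (r-rC)*((r-re)*(rc-r)) :=
                mul_le_mul (by linarith) t1
                  (mul_nonneg (by linarith) (by linarith)) (by linarith)
              exact mul_le_mul (by linarith) t2
                (mul_nonneg (by linarith) (mul_nonneg (by linarith) (by linarith)))
                (by linarith)
          _ = μ r := by rw [hroots r]; ring
      have hsm : b*a^2*(rc^2-r^2)^2 < C*(rc-r)*rc^4 := by
        have habs : (r+rc)^2 ≤ (2*|rc|+1)^2 := by
          have hrabs : |r| ≤ |rc| + 1 := by
            calc |r| = |rc + (r-rc)| := by ring_nf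
              _ ≤ |rc| + |r-rc| := abs_add_le _ _
              _ ≤ |rc| + 1 := by rw [abs_of_neg (show r - rc < (0:ℝ) by linarith)]; linarith
          have h1 : |r + rc| ≤ 2*|rc| + 1 := by
            calc |r+rc| ≤ |r| + |rc| := abs_add_le _ _
              _ ≤ 2*|rc| + 1 := by linarith
          nlinarith [abs_nonneg (r+rc), sq_abs (r+rc), abs_nonneg rc]
        have hγM : γ*(M+1) ≤ C*rc^4 := by
          rw [← le_div_iff₀ (by linarith)]
          exact hγ4
        have hgm : γ*M < C*rc^4 := by nlinarith
        calc b*a^2*(rc^2-r^2)^2 = (rc-r)^2*(b*a^2*(r+rc)^2) := by ring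
          _ ≤ (rc-r)^2*(b*a^2*(2*|rc|+1)^2) := by gcongr
          _ = (rc-r)*((rc-r)*M) := by rw [hMdef]; ring
          _ ≤ (rc-r)*(γ*M) := by
              apply mul_le_mul_of_nonneg_left ?_ (by linarith)
              exact mul_le_mul_of_nonneg_right (by linarith) hM0
          _ < (rc-r)*(C*rc^4) := mul_lt_mul_of_pos_left hgm (by linarith)
          _ = C*(rc-r)*rc^4 := by ring
      exact Qcore_neg b a rc hb0 hrc0 c hc0 hcb μ Q hQ r hrne (C*(rc-r)) hP hμP hsm θ
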